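/- Sequential composition of (ε, δ)-differential privacy for discrete distributions: let μ, ν ∈ D(X) satisfy the (ε, δ)-indistinguishability relation (μ(S) ≤ e^ε ν(S) + δ and ν(S) ≤ e^ε μ(S) + δ for all S ⊆ X), and let f, g : X → D(Y) be such that f(x) and g(x) are (ε', δ')-indistinguishable for every x ∈ X. Then the Kleisli extensions f†μ and g†ν are (ε + ε', δ + δ')-indistinguishable. -/

import Mathlib

open scoped ENNReal
open MeasureTheory

/-- The measure of a set under a discrete distribution. -/
noncomputable def pmfSet {X : Type*} (μ : PMF X) (S : Set X) : ℝ≥0∞ :=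
  ∑' x : S, μ x

/-- `(ε,δ)`-indistinguishability of two discrete probability distributions. -/
def DPRel {X : Type*} (ε δ : ℝ) (μ ν : PMF X) : Prop :=
  ∀ S : Set X,
    pmfSet μ S ≤ ENNReal.ofReal (Real.exp ε) * pmfSet ν S + ENNReal.ofReal δ ∧
    pmfSet ν S ≤ ENNReal.ofReal (Real.exp ε) * pmfSet μ S + ENNReal.ofReal δ

lemma pmfSet_eq_indicator {X : Type*} (μ : PMF X) (S : Set X) :
    pmfSet μ S = ∑' x, S.indicator μ x := tsum_subtype S μ

lemma pmfSet_le_one {X : Type*} (μ : PMF X) (S : Set X) : pmfSet μ S ≤ 1 := by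
  rw [pmfSet_eq_indicator]
  calc ∑' x, S.indicator μ x ≤ ∑' x, μ x :=
        ENNReal.tsum_le_tsum (fun x => Set.indicator_le_self S μ x)
    _ = 1 := μ.tsum_coe

lemma layercake {X : Type*} (μ : PMF X) (φ : X → ℝ≥0∞) (hφ : ∀ x, φ x ≤ 1) :
    ∑' x, μ x * φ x
      = ∫⁻ t in Set.Ioc (0:ℝ) 1, pmfSet μ {x | t < (φ x).toReal} := by
  set F : X → ℝ := fun x => (φ x).toReal with hF
  have hφtop : ∀ x, φ x ≠ ∞ := fun x => ne_top_of_le_ne_top ENNReal.one_ne_top (hφ x)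
  have hF0 : ∀ x, 0 ≤ F x := fun x => ENNReal.toReal_nonneg
  have hF1 : ∀ x, F x ≤ 1 := by
    intro x
    have := ENNReal.toReal_mono ENNReal.one_ne_top (hφ x)
    simpa using this
  -- per-x identity
  have hx : ∀ x : X, ∫⁻ t in Set.Ioc (0:ℝ) 1, (Set.Iio (F x)).indicator (fun _ => μ x) t
      = μ x * φ x := by
    intro x
    rw [lintegral_indicator_const measurableSet_Iio,
      Measure.restrict_apply measurableSet_Iio]
    have hset : Set.Iio (F x) ∩ Set.Ioc (0:ℝ) 1 = Set.Ioo 0 (F x) := by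
      ext t
      simp only [Set.mem_inter_iff, Set.mem_Iio, Set.mem_Ioc, Set.mem_Ioo]
      constructor
      · rintro ⟨h1, h2, _⟩; exact ⟨h2, h1⟩
      · rintro ⟨h1, h2⟩; exact ⟨h2, h1, le_trans h2.le (hF1 x)⟩
    rw [hset, Real.volume_Ioo, sub_zero, hF, ENNReal.ofReal_toReal (hφtop x)]
  -- restrict to the countable support
  have hsupp : Countable μ.support := (μ.support_countable).to_subtype
  have h1 : ∑' x, μ x * φ x = ∑' x : μ.support, μ x * φ x := by
    refine (tsum_subtype_eq_of_support_subset ?_).symm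
    intro x hx'
    simp only [Function.mem_support, ne_eq] at hx'
    have : μ x ≠ 0 := fun h => hx' (by simp [h])
    exact this
  rw [h1]
  have h2 : ∀ x : μ.support, μ x * φ x
      = ∫⁻ t in Set.Ioc (0:ℝ) 1, (Set.Iio (F x)).indicator (fun _ => μ (x:X)) t :=
    fun x => (hx x).symm
  rw [tsum_congr h2]
  rw [← lintegral_tsum (fun x =>
    ((measurable_const.indicator measurableSet_Iio).aemeasurable))]
  refine setLIntegral_congr_fun measurableSet_Ioc ?_
  intro t _
  have h3 : ∀ x : μ.support,
      (Set.Iio (F x)).indicator (fun _ => μ (x:X)) t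
        = ({x : X | t < F x}).indicator μ x := by
    intro x
    by_cases h : t < F (x:X)
    · simp [Set.indicator_of_mem, h, Set.mem_Iio, Set.mem_setOf_eq]
    · simp [Set.indicator_of_notMem, h, Set.mem_Iio, Set.mem_setOf_eq]
  beta_reduce
  rw [tsum_congr h3, pmfSet_eq_indicator]
  refine tsum_subtype_eq_of_support_subset ?_
  intro x hx'
  simp only [Function.mem_support, ne_eq, Set.indicator_apply_ne_zero] at hx'
  have : μ x ≠ 0 := by
    intro h
    apply hx'.2
    simp [Function.support, h]
  exact this

lemma expectation_bound {X : Type*} (E D : ℝ≥0∞) (hE : E ≠ ∞) (μ ν : PMF X)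
    (h : ∀ S : Set X, pmfSet μ S ≤ E * pmfSet ν S + D)
    (φ : X → ℝ≥0∞) (hφ : ∀ x, φ x ≤ 1) :
    ∑' x, μ x * φ x ≤ E * ∑' x, ν x * φ x + D := by
  rw [layercake μ φ hφ, layercake ν φ hφ]
  calc ∫⁻ t in Set.Ioc (0:ℝ) 1, pmfSet μ {x | t < (φ x).toReal}
      ≤ ∫⁻ t in Set.Ioc (0:ℝ) 1, (E * pmfSet ν {x | t < (φ x).toReal} + D) :=
        lintegral_mono (fun t => h _)
    _ = (∫⁻ t in Set.Ioc (0:ℝ) 1, E * pmfSet ν {x | t < (φ x).toReal})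
          + ∫⁻ _t in Set.Ioc (0:ℝ) 1, D :=
        lintegral_add_right _ measurable_const
    _ ≤ E * (∫⁻ t in Set.Ioc (0:ℝ) 1, pmfSet ν {x | t < (φ x).toReal}) + D := by
        rw [lintegral_const_mul' E _ hE, setLIntegral_const]
        gcongr
        rw [Real.volume_Ioc]
        simp

lemma min_one_add {a b : ℝ≥0∞} : min 1 (a + b) ≤ min 1 a + b := by
  calc min 1 (a + b) ≤ min (1 + b) (a + b) :=
        min_le_min (le_add_right le_rfl) le_rfl
    _ = min 1 a + b := min_add_add_right 1 a b

lemma side {X Y : Type*} (E E' D D' : ℝ≥0∞) (hE : E ≠ ∞)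
    (μ ν : PMF X) (f g : X → PMF Y) (T : Set Y)
    (hμν : ∀ S : Set X, pmfSet μ S ≤ E * pmfSet ν S + D)
    (hfg : ∀ x, pmfSet (f x) T ≤ E' * pmfSet (g x) T + D') :
    ∑' x, μ x * pmfSet (f x) T
      ≤ E * E' * (∑' x, ν x * pmfSet (g x) T) + (D + D') := by
  set φ : X → ℝ≥0∞ := fun x => min 1 (E' * pmfSet (g x) T) with hφdef
  have hφ1 : ∀ x, φ x ≤ 1 := fun x => min_le_left _ _
  have step1 : ∀ x, pmfSet (f x) T ≤ φ x + D' := by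
    intro x
    have h1 : pmfSet (f x) T ≤ min 1 (E' * pmfSet (g x) T + D') :=
      le_min (pmfSet_le_one _ _) (hfg x)
    exact h1.trans min_one_add
  calc ∑' x, μ x * pmfSet (f x) T
      ≤ ∑' x, (μ x * φ x + μ x * D') := by
        refine ENNReal.tsum_le_tsum (fun x => ?_)
        rw [← mul_add]
        exact mul_le_mul_right (step1 x) _
    _ = (∑' x, μ x * φ x) + (∑' x, μ x) * D' := by
        rw [ENNReal.tsum_add, ENNReal.tsum_mul_right]
    _ = (∑' x, μ x * φ x) + D' := by rw [μ.tsum_coe, one_mul]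
    _ ≤ (E * ∑' x, ν x * φ x + D) + D' := by
        gcongr
        exact expectation_bound E D hE μ ν hμν φ hφ1
    _ ≤ (E * ∑' x, ν x * (E' * pmfSet (g x) T) + D) + D' := by
        gcongr with x
        exact min_le_right _ _
    _ = E * E' * (∑' x, ν x * pmfSet (g x) T) + (D + D') := by
        have : ∀ x, ν x * (E' * pmfSet (g x) T) = E' * (ν x * pmfSet (g x) T) :=
          fun x => by ring
        rw [tsum_congr this, ENNReal.tsum_mul_left, ← mul_assoc, add_assoc]

lemma pmfSet_bind {X Y : Type*} (μ : PMF X) (f : X → PMF Y) (T : Set Y) :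
    pmfSet (μ.bind f) T = ∑' x, μ x * pmfSet (f x) T := by
  unfold pmfSet
  simp only [PMF.bind_apply]
  rw [ENNReal.tsum_comm]
  exact tsum_congr (fun x => ENNReal.tsum_mul_left)

/-- Sequential composition of `(ε,δ)`-differential privacy. -/
theorem DPRel_seq_comp {X Y : Type*} (ε δ ε' δ' : ℝ)
    (hε : 0 ≤ ε) (hδ : 0 ≤ δ) (hε' : 0 ≤ ε') (hδ' : 0 ≤ δ')
    (μ ν : PMF X) (f g : X → PMF Y)
    (hμν : DPRel ε δ μ ν) (hfg : ∀ x : X, DPRel ε' δ' (f x) (g x)) :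
    DPRel (ε + ε') (δ + δ') (μ.bind f) (ν.bind g) := by
  intro T
  have hEE : ENNReal.ofReal (Real.exp (ε + ε'))
      = ENNReal.ofReal (Real.exp ε) * ENNReal.ofReal (Real.exp ε') := by
    rw [Real.exp_add, ENNReal.ofReal_mul (Real.exp_nonneg ε)]
  have hDD : ENNReal.ofReal (δ + δ') = ENNReal.ofReal δ + ENNReal.ofReal δ' :=
    ENNReal.ofReal_add hδ hδ'
  rw [pmfSet_bind μ f T, pmfSet_bind ν g T, hEE, hDD]
  constructor
  · exact side _ _ _ _ ENNReal.ofReal_ne_top μ ν f g T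
      (fun S => (hμν S).1) (fun x => ((hfg x) T).1)
  · exact side _ _ _ _ ENNReal.ofReal_ne_top ν μ g f T
      (fun S => (hμν S).2) (fun x => ((hfg x) T).2)
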